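/- Let λ > 0 and γ > 2, and define the smoothly clipped absolute deviation (SCAD) penalty r_{λ,γ} : ℝ → ℝ by r_{λ,γ}(θ) = λ|θ| if |θ| ≤ λ, r_{λ,γ}(θ) = (2γλ|θ| − (θ² + λ²))/(2(γ−1)) if λ < |θ| ≤ γλ, and r_{λ,γ}(θ) = λ²(γ²−1)/(2(γ−1)) if |θ| > γλ. Then the function g(θ) = θ²/2 + r_{λ,γ}(θ) is strongly convex on ℝ with modulus (γ−2)/(γ−1); that is, θ ↦ g(θ) − ((γ−2)/(2(γ−1)))·θ² is convex on ℝ. -/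

import Mathlib

/-- Square of the positive part of an affine function is convex. -/
lemma scad_aux_sq (c d : ℝ) :
    ConvexOn ℝ Set.univ (fun t : ℝ => max (c + d * t) 0 ^ 2) := by
  refine ⟨convex_univ, ?_⟩
  intro x _ y _ a b ha hb hab
  simp only [smul_eq_mul]
  set u := max (c + d * x) 0 with hu
  set v := max (c + d * y) 0 with hv
  have hu0 : (0 : ℝ) ≤ u := le_max_right _ _
  have hv0 : (0 : ℝ) ≤ v := le_max_right _ _
  have hu1 : c + d * x ≤ u := le_max_left _ _
  have hv1 : c + d * y ≤ v := le_max_left _ _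
  have haux : a * (c + d * x) ≤ a * u := mul_le_mul_of_nonneg_left hu1 ha
  have hbvy : b * (c + d * y) ≤ b * v := mul_le_mul_of_nonneg_left hv1 hb
  have hnn : 0 ≤ a * u + b * v := by
    have := mul_nonneg ha hu0
    have := mul_nonneg hb hv0
    linarith
  have h1 : max (c + d * (a * x + b * y)) 0 ≤ a * u + b * v := by
    refine max_le ?_ hnn
    have : c + d * (a * x + b * y) = a * (c + d * x) + b * (c + d * y) := by
      linear_combination (-c) * hab
    linarith [haux, hbvy, this.le, this.ge]
  calc max (c + d * (a * x + b * y)) 0 ^ 2 ≤ (a * u + b * v) ^ 2 :=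
        pow_le_pow_left₀ (le_max_right _ _) h1 2
    _ ≤ a * u ^ 2 + b * v ^ 2 := by nlinarith [sq_nonneg (u - v), mul_nonneg ha hb]

/-- Affine functions are convex. -/
lemma scad_aux_affine (c d : ℝ) :
    ConvexOn ℝ Set.univ (fun t : ℝ => c * t + d) := by
  refine ⟨convex_univ, ?_⟩
  intro x _ y _ a b _ _ hab
  simp only [smul_eq_mul]
  apply le_of_eq
  linear_combination (-d) * hab

/-- The SCAD-regularized quadratic `θ ↦ θ²/2 + r_{λ,γ}(θ)` is strongly convex
with modulus `(γ−2)/(γ−1)` when `γ > 2`. -/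
theorem scad_strongly_convex
    (lam γ : ℝ) (hlam : 0 < lam) (hγ : 2 < γ)
    (r : ℝ → ℝ)
    (hr : ∀ θ : ℝ, r θ =
      if |θ| ≤ lam then lam * |θ|
      else if |θ| ≤ γ * lam then
        (2 * γ * lam * |θ| - (θ ^ 2 + lam ^ 2)) / (2 * (γ - 1))
      else lam ^ 2 * (γ ^ 2 - 1) / (2 * (γ - 1))) :
    ConvexOn ℝ Set.univ
      (fun θ : ℝ => (θ ^ 2 / 2 + r θ) - ((γ - 2) / (2 * (γ - 1))) * θ ^ 2) := by
  have hγ1 : (0 : ℝ) < γ - 1 := by linarith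
  have hγ1' : (0 : ℝ) < 2 * (γ - 1) := by linarith
  have hcnn : (0 : ℝ) ≤ (2 * (γ - 1))⁻¹ := (inv_nonneg).mpr hγ1'.le
  -- The convex "global" function G
  set G : ℝ → ℝ := fun t =>
    (2 * (γ - 1))⁻¹ *
      ((2 * γ * lam * t + (-(lam ^ 2)) +
        (max (lam + (-1) * t) 0 ^ 2 + max (-(γ * lam) + 1 * t) 0 ^ 2))) with hGdef
  -- pointwise identity : f = G ∘ abs
  have key : (fun θ : ℝ => (θ ^ 2 / 2 + r θ) - ((γ - 2) / (2 * (γ - 1))) * θ ^ 2)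
      = G ∘ (fun θ : ℝ => |θ|) := by
    funext θ
    simp only [Function.comp, hGdef]
    rw [hr θ]
    split_ifs with h1 h2
    · rw [max_eq_left (by linarith : (0:ℝ) ≤ lam + (-1) * |θ|),
        max_eq_right (by nlinarith : -(γ * lam) + 1 * |θ| ≤ (0:ℝ))]
      field_simp
      linear_combination (-1) * sq_abs θ
    · rw [max_eq_right (by push_neg at h1; linarith : lam + (-1) * |θ| ≤ (0:ℝ)),
        max_eq_right (by linarith : -(γ * lam) + 1 * |θ| ≤ (0:ℝ))]
      rw [← sq_abs θ]
      field_simp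
      ring
    · push_neg at h1 h2
      rw [max_eq_right (by linarith : lam + (-1) * |θ| ≤ (0:ℝ)),
        max_eq_left (by linarith : (0:ℝ) ≤ -(γ * lam) + 1 * |θ|)]
      field_simp
      linear_combination (-1) * sq_abs θ
  rw [key]
  -- convexity of G on all of ℝ
  have hGconv : ConvexOn ℝ Set.univ G := by
    have h0 := scad_aux_affine (2 * γ * lam) (-(lam ^ 2))
    have h1 := scad_aux_sq lam (-1)
    have h2 := scad_aux_sq (-(γ * lam)) 1
    have hsum := (h0.add (h1.add h2)).smul (c := (2 * (γ - 1))⁻¹) hcnn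
    convert hsum using 2
    all_goals rfl
  -- image of abs
  have himg : (fun θ : ℝ => |θ|) '' Set.univ = Set.Ici 0 := by
    rw [Set.image_univ]
    ext x
    simp only [Set.mem_range, Set.mem_Ici]
    constructor
    · rintro ⟨y, rfl⟩; exact abs_nonneg y
    · intro hx; exact ⟨x, abs_of_nonneg hx⟩
  -- monotonicity of G on Ici 0
  have hGmono : MonotoneOn G (Set.Ici 0) := by
    intro s hs t ht hst
    simp only [hGdef]
    apply mul_le_mul_of_nonneg_left _ hcnn
    have hs0 : (0 : ℝ) ≤ s := hs
    set ps := max (lam + (-1) * s) 0 with hps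
    set pt := max (lam + (-1) * t) 0 with hpt
    set qs := max (-(γ * lam) + 1 * s) 0 with hqs
    set qt := max (-(γ * lam) + 1 * t) 0 with hqt
    have hpt0 : (0 : ℝ) ≤ pt := le_max_right _ _
    have hps0 : (0 : ℝ) ≤ ps := le_max_right _ _
    have hqs0 : (0 : ℝ) ≤ qs := le_max_right _ _
    have hqt0 : (0 : ℝ) ≤ qt := le_max_right _ _
    have hp1 : pt ≤ ps := max_le_max (by linarith) le_rfl
    have hp2 : ps ≤ lam := max_le (by linarith) hlam.le
    have hp3 : ps ≤ pt + (t - s) := by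
      refine max_le ?_ (by linarith)
      have := le_max_left (lam + (-1) * t) (0 : ℝ)
      linarith
    have hq1 : qs ≤ qt := max_le_max (by linarith) le_rfl
    have hqsq : qs ^ 2 ≤ qt ^ 2 := pow_le_pow_left₀ hqs0 hq1 2
    have hpprod : (ps - pt) * (ps + pt) ≤ (t - s) * (2 * lam) := by
      have h1 : ps - pt ≤ t - s := by linarith
      have h2 : ps + pt ≤ 2 * lam := by linarith
      have h3 : (0 : ℝ) ≤ ps - pt := by linarith
      have h4 : (0 : ℝ) ≤ ps + pt := by linarith
      calc (ps - pt) * (ps + pt) ≤ (t - s) * (ps + pt) :=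
            mul_le_mul_of_nonneg_right h1 h4
        _ ≤ (t - s) * (2 * lam) :=
            mul_le_mul_of_nonneg_left h2 (by linarith)
    have hmul : (t - s) * (2 * lam) ≤ (t - s) * (2 * γ * lam) := by
      apply mul_le_mul_of_nonneg_left _ (by linarith)
      nlinarith
    nlinarith [hpprod, hqsq, hmul]
  -- assemble via composition
  exact ConvexOn.comp (himg ▸ hGconv.subset (Set.subset_univ _) (convex_Ici 0))
    (by exact (convexOn_univ_norm : ConvexOn ℝ Set.univ (norm : ℝ → ℝ)))
    (himg ▸ hGmono)
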